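/- For any finite simple graph H and n ≥ 1, π(K_n ∘ H) = π(H) + (n − 1)·|V(H)|. -/

import Mathlib

/-- A list is a repetition if it is of the form `w ++ w` for a nonempty `w`. -/
def IsRepetition {α : Type*} (l : List α) : Prop := ∃ w : List α, w ≠ [] ∧ l = w ++ w

/-- A list is non-repetitive if no block of consecutive elements is a repetition. -/
def NonRepetitive {α : Type*} (l : List α) : Prop :=
  ∀ t : List α, t <:+: l → ¬ IsRepetition t

/-- A vertex colouring is non-repetitive if the colour sequence of every path
is not a repetition. -/
def NonRepColoring {V β : Type*} (G : SimpleGraph V) (φ : V → β) : Prop :=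
  ∀ ⦃u v : V⦄ (p : G.Walk u v), p.IsPath → ¬ IsRepetition (p.support.map φ)

/-- The Thue chromatic number: minimum number of colours of a non-repetitive colouring. -/
noncomputable def thueNumber {V : Type*} [Fintype V] (G : SimpleGraph V) : ℕ :=
  sInf {k | ∃ φ : V → Fin k, NonRepColoring G φ}

/-- The Thue choice number: least `k` such that from any lists of size at least `k`
one can choose a non-repetitive colouring. -/
noncomputable def thueChoiceNumber {V : Type*} [Fintype V] (G : SimpleGraph V) : ℕ :=
  sInf {k | ∀ L : V → Finset ℕ, (∀ v, k ≤ (L v).card) →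
    ∃ φ : V → ℕ, (∀ v, φ v ∈ L v) ∧ NonRepColoring G φ}

/-- The independence number of a graph. -/
noncomputable def indepNum {V : Type*} [Fintype V] (G : SimpleGraph V) : ℕ :=
  sSup {n | ∃ s : Finset V, (∀ a ∈ s, ∀ b ∈ s, ¬ G.Adj a b) ∧ s.card = n}

/-- The lexicographic product of two simple graphs. -/
def lexProd {V W : Type*} (G : SimpleGraph V) (H : SimpleGraph W) : SimpleGraph (V × W) where
  Adj x y := G.Adj x.1 y.1 ∨ (x.1 = y.1 ∧ H.Adj x.2 y.2)
  symm := by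
    constructor
    rintro x y (h | ⟨h1, h2⟩)
    · exact Or.inl h.symm
    · exact Or.inr ⟨h1.symm, h2.symm⟩
  loopless := by
    constructor
    rintro x (h | ⟨h1, h2⟩)
    · exact G.loopless.irrefl _ h
    · exact H.loopless.irrefl _ h2


open SimpleGraph

lemma not_isRepetition_of_nodup {α : Type*} {l : List α} (h : l.Nodup) : ¬ IsRepetition l := by
  rintro ⟨w, hw, rfl⟩
  rw [List.nodup_append] at h
  exact h.2.2 _ (List.head_mem hw) _ (List.head_mem hw) rfl

lemma IsRepetition.map {α β : Type*} {l : List α} (f : α → β) (h : IsRepetition l) :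
    IsRepetition (l.map f) := by
  obtain ⟨w, hw, rfl⟩ := h
  exact ⟨w.map f, by simpa using hw, by simp⟩

lemma IsRepetition.of_map {α β : Type*} {l : List α} {f : α → β}
    (hf : Function.Injective f) (h : IsRepetition (l.map f)) : IsRepetition l := by
  obtain ⟨w, hw, hl⟩ := h
  have hlen : l.length = w.length + w.length := by
    simpa using congrArg List.length hl
  set w₁ := l.take w.length with hw1
  set w₂ := l.drop w.length with hw2
  have hsplit : l = w₁ ++ w₂ := (List.take_append_drop _ _).symm
  have h1 : w₁.map f = w ∧ w₂.map f = w := by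
    have := hl
    rw [hsplit, List.map_append] at this
    have hl1 : (w₁.map f).length = w.length := by
      simp [hw1, hlen]
    exact ⟨List.append_inj_left this (by simpa using hl1),
      List.append_inj_right this (by simpa using hl1)⟩
  have : w₁ = w₂ := by
    have := h1.1.trans h1.2.symm
    exact List.map_injective_iff.mpr hf this
  refine ⟨w₁, ?_, by rw [hsplit, this]⟩
  intro hnil
  apply hw
  rw [← h1.1, hnil]; rfl

lemma nonRepColoring_of_injective {V β : Type*} {G : SimpleGraph V} {φ : V → β}
    (hφ : Function.Injective φ) : NonRepColoring G φ := by
  intro u v p hp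
  exact not_isRepetition_of_nodup ((p.isPath_def.mp hp).map hφ)

lemma nonRepColoring_comp {V β γ : Type*} {G : SimpleGraph V} {φ : V → β} {ι : β → γ}
    (hι : Function.Injective ι) (h : NonRepColoring G φ) : NonRepColoring G (ι ∘ φ) := by
  intro u v p hp hrep
  rw [← List.map_map] at hrep
  exact h p hp (hrep.of_map hι)

lemma thueNumber_le {V : Type*} [Fintype V] {G : SimpleGraph V} {k : ℕ}
    (φ : V → Fin k) (h : NonRepColoring G φ) : thueNumber G ≤ k :=
  Nat.sInf_le ⟨φ, h⟩

lemma thueNumber_set_nonempty {V : Type*} [Fintype V] (G : SimpleGraph V) :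
    {k | ∃ φ : V → Fin k, NonRepColoring G φ}.Nonempty :=
  ⟨Fintype.card V, Fintype.equivFin V, nonRepColoring_of_injective (Fintype.equivFin V).injective⟩

lemma thueNumber_spec {V : Type*} [Fintype V] (G : SimpleGraph V) :
    ∃ φ : V → Fin (thueNumber G), NonRepColoring G φ :=
  Nat.sInf_mem (thueNumber_set_nonempty G)

lemma thueNumber_le_card_image {V β : Type*} [Fintype V] [DecidableEq β] {G : SimpleGraph V}
    (φ : V → β) (h : NonRepColoring G φ) :
    thueNumber G ≤ (Finset.image φ Finset.univ).card := by
  classical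
  set S := Finset.image φ Finset.univ with hS
  have hmem : ∀ v, φ v ∈ S := fun v => Finset.mem_image_of_mem _ (Finset.mem_univ v)
  set φ₁ : V → ↥S := fun v => ⟨φ v, hmem v⟩ with hφ₁
  have h1 : NonRepColoring G φ₁ := by
    intro u v p hp hrep
    apply h p hp
    have : (p.support.map φ₁).map (Subtype.val) = p.support.map φ := by
      simp [hφ₁, List.map_map, Function.comp]
    rw [← this]
    exact hrep.map _
  have e : ↥S ≃ Fin S.card := by
    refine (Fintype.equivFin ↥S).trans (finCongr ?_)
    simp
  have := nonRepColoring_comp e.injective h1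
  exact thueNumber_le _ this

/-- Split a repetition of a mapped list into two halves of `l`. -/
lemma IsRepetition.exists_split {α β : Type*} {l : List α} {f : α → β}
    (h : IsRepetition (l.map f)) :
    ∃ s₁ s₂ : List α, l = s₁ ++ s₂ ∧ s₁.length = s₂.length ∧
      s₁.map f = s₂.map f ∧ s₁ ≠ [] := by
  obtain ⟨w, hw, hl⟩ := h
  have hlen : l.length = w.length + w.length := by simpa using congrArg List.length hl
  refine ⟨l.take w.length, l.drop w.length, (List.take_append_drop _ _).symm, ?_, ?_, ?_⟩
  · simp [hlen]
  · have h2 : (l.take w.length).map f ++ (l.drop w.length).map f = w ++ w := by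
      rw [← List.map_append, List.take_append_drop]; exact hl
    have hl1 : ((l.take w.length).map f).length = w.length := by simp [hlen]
    have e1 := List.append_inj_left h2 (by simpa using hl1)
    have e2 := List.append_inj_right h2 (by simpa using hl1)
    rw [e1, e2]
  · intro hnil
    apply hw
    have hlw : (l.take w.length).length = w.length := by simp [hlen]
    rw [hnil] at hlw
    exact List.length_eq_zero_iff.mp hlw.symm

/-- The decomposition lemma for base-N digits. -/
lemma nat_decomp {a b x y N : ℕ} (hx : x < N) (hy : y < N) (h : a * N + x = b * N + y) :
    a = b ∧ x = y := by
  have hab : a = b := by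
    rcases Nat.lt_trichotomy a b with hlt | heq | hgt
    · have : (a + 1) * N ≤ b * N := Nat.mul_le_mul_right N hlt
      rw [Nat.succ_mul] at this
      omega
    · exact heq
    · have : (b + 1) * N ≤ a * N := Nat.mul_le_mul_right N hgt
      rw [Nat.succ_mul] at this
      omega
  subst hab
  exact ⟨rfl, by omega⟩


section fibre
variable {V W : Type*} {G : SimpleGraph V} {H : SimpleGraph W}

/-- The hom embedding `H` into fibre `i` of `lexProd G H`. -/
def fibreHom (G : SimpleGraph V) (H : SimpleGraph W) (i : V) : H →g lexProd G H where
  toFun w := (i, w)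
  map_rel' := fun h => Or.inr ⟨rfl, h⟩

lemma fibreHom_injective (i : V) : Function.Injective (fibreHom G H i) := by
  intro a b h
  have : (i, a) = (i, b) := h; exact (Prod.mk.inj this).2

/-- Extraction: a walk of `lexProd G H` staying in fibre `i` projects to a walk of `H`. -/
lemma fibreWalk (i : V) : ∀ {a b : V × W} (p : (lexProd G H).Walk a b),
    (∀ v ∈ p.support, v.1 = i) →
    ∃ q : H.Walk a.2 b.2, q.support = p.support.map Prod.snd := by
  intro a b p
  induction p with
  | nil => intro _; exact ⟨Walk.nil, by simp⟩
  | @cons a x b h p ih =>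
    intro hf
    have ha : a.1 = i := hf a (by simp)
    have hx : x.1 = i := hf x (by simp [Walk.support_cons])
    have hH : H.Adj a.2 x.2 := by
      rcases h with h | ⟨_, h⟩
      · exact absurd (ha.trans hx.symm) h.ne
      · exact h
    obtain ⟨q, hq⟩ := ih (fun v hv => hf v (by simp [Walk.support_cons, hv]))
    exact ⟨Walk.cons hH q, by simp [Walk.support_cons, hq]⟩

end fibre

set_option linter.unusedSectionVars false
section facts
variable {W : Type*} [Fintype W] {H : SimpleGraph W} {n : ℕ} {k : ℕ}
  {ψ : Fin n × W → Fin k}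

lemma lexAdj_of_ne {i j : Fin n} (hij : i ≠ j) (a b : W) :
    (lexProd (completeGraph (Fin n)) H).Adj (i, a) (j, b) :=
  Or.inl hij

/-- Fact A: in a nonrepetitive colouring, different fibres have different colours. -/
lemma factA (hψ : NonRepColoring (lexProd (completeGraph (Fin n)) H) ψ)
    {i j : Fin n} (hij : i ≠ j) (a b : W) : ψ (i, a) ≠ ψ (j, b) := by
  intro he
  have hadj := lexAdj_of_ne (H := H) hij a b
  refine hψ (Walk.cons hadj Walk.nil) ?_ ⟨[ψ (i, a)], by simp, ?_⟩
  · rw [Walk.isPath_def]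
    simp [Walk.support_cons, Prod.ext_iff, hij]
  · simp [Walk.support_cons, he]

/-- Fact B: at most one fibre can repeat a colour. -/
lemma factB (hψ : NonRepColoring (lexProd (completeGraph (Fin n)) H) ψ)
    {i j : Fin n} (hij : i ≠ j) {a b c d : W} (hab : a ≠ b) (hcd : c ≠ d)
    (h1 : ψ (i, a) = ψ (i, b)) (h2 : ψ (j, c) = ψ (j, d)) : False := by
  refine hψ (Walk.cons (lexAdj_of_ne hij a c)
      (Walk.cons (lexAdj_of_ne hij.symm c b)
        (Walk.cons (lexAdj_of_ne hij b d) Walk.nil))) ?_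
    ⟨[ψ (i, a), ψ (j, c)], by simp, ?_⟩
  · rw [Walk.isPath_def]
    simp [Walk.support_cons, Prod.ext_iff, hij, hij.symm, hab, hcd]
  · simp [Walk.support_cons, h1, h2]

end facts

lemma fibreRestrict {V W : Type*} {G : SimpleGraph V} {H : SimpleGraph W} {β : Type*}
    {ψ : V × W → β} (hψ : NonRepColoring (lexProd G H) ψ) (i : V) :
    NonRepColoring H (fun w => ψ (i, w)) := by
  intro u v q hq hrep
  apply hψ (q.map (fibreHom G H i)) (Walk.map_isPath_of_injective (fibreHom_injective i) hq)
  rw [Walk.support_map, List.map_map]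
  exact hrep

lemma lowerBound {W : Type*} [Fintype W] {H : SimpleGraph W} {n k : ℕ}
    {ψ : Fin n × W → Fin k}
    (hψ : NonRepColoring (lexProd (completeGraph (Fin n)) H) ψ) (hn : 1 ≤ n) :
    thueNumber H + (n - 1) * Fintype.card W ≤ k := by
  classical
  set C : Fin n → Finset (Fin k) := fun i => Finset.univ.image (fun w => ψ (i, w)) with hC
  have hdisj : ∀ i ∈ Finset.univ, ∀ j ∈ Finset.univ, i ≠ j → Disjoint (C i) (C j) := by
    intro i _ j _ hij
    rw [Finset.disjoint_left]
    rintro x hx hx'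
    simp only [hC, Finset.mem_image, Finset.mem_univ, true_and] at hx hx'
    obtain ⟨a, rfl⟩ := hx
    obtain ⟨b, hb⟩ := hx'
    exact factA hψ hij.symm b a hb
  have hsum : ∑ i, (C i).card ≤ k := by
    rw [← Finset.card_biUnion hdisj]
    calc (Finset.univ.biUnion C).card ≤ Fintype.card (Fin k) := Finset.card_le_univ _
      _ = k := Fintype.card_fin k
  have key : ∀ i₀ : Fin n, (∀ i, i ≠ i₀ → Function.Injective (fun w => ψ (i, w))) →
      thueNumber H + (n - 1) * Fintype.card W ≤ k := by
    intro i₀ hinj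
    have h1 : thueNumber H ≤ (C i₀).card :=
      thueNumber_le_card_image _ (fibreRestrict hψ i₀)
    have h2 : ∑ i ∈ Finset.univ.erase i₀, (C i).card = (n - 1) * Fintype.card W := by
      have : ∀ i ∈ Finset.univ.erase i₀, (C i).card = Fintype.card W := by
        intro i hi
        rw [hC]
        rw [Finset.card_image_of_injective _ (hinj i (Finset.mem_erase.mp hi).1)]
        exact Finset.card_univ
      rw [Finset.sum_congr rfl this, Finset.sum_const, smul_eq_mul,
        Finset.card_erase_of_mem (Finset.mem_univ _), Finset.card_univ, Fintype.card_fin]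
    calc thueNumber H + (n - 1) * Fintype.card W
        ≤ (C i₀).card + ∑ i ∈ Finset.univ.erase i₀, (C i).card := by rw [h2]; omega
      _ = ∑ i, (C i).card := by
          rw [add_comm]
          exact Finset.sum_erase_add _ _ (Finset.mem_univ _)
      _ ≤ k := hsum
  by_cases h : ∃ i, ¬ Function.Injective (fun w => ψ (i, w))
  · obtain ⟨i₀, hi₀⟩ := h
    refine key i₀ (fun i hi => ?_)
    by_contra hni
    obtain ⟨a, b, hab, hne⟩ := Function.not_injective_iff.mp hni
    obtain ⟨c, d, hcd, hne'⟩ := Function.not_injective_iff.mp hi₀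
    exact factB hψ hi hne hne' hab hcd
  · push_neg at h
    exact key ⟨0, hn⟩ (fun i _ => h i)

section upper
variable {W : Type*} [Fintype W] {H : SimpleGraph W} {n m : ℕ}

/-- The colouring of the lexicographic product. -/
noncomputable def prodColor (φ₀ : W → Fin m) (hn : 1 ≤ n) :
    Fin n × W → Fin (m + (n - 1) * Fintype.card W) := fun p =>
  if h : (p.1 : ℕ) = 0 then
    ⟨φ₀ p.2, lt_of_lt_of_le (φ₀ p.2).isLt (Nat.le_add_right _ _)⟩
  else
    ⟨m + ((p.1 : ℕ) - 1) * Fintype.card W + (Fintype.equivFin W p.2 : ℕ), by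
      have h1 : (Fintype.equivFin W p.2 : ℕ) < Fintype.card W := (Fintype.equivFin W p.2).isLt
      have h2 : (p.1 : ℕ) < n := p.1.isLt
      have h3 : ((p.1 : ℕ) - 1) * Fintype.card W + (Fintype.equivFin W p.2 : ℕ) <
          (n - 1) * Fintype.card W := by
        calc ((p.1 : ℕ) - 1) * Fintype.card W + (Fintype.equivFin W p.2 : ℕ)
            < ((p.1 : ℕ) - 1) * Fintype.card W + Fintype.card W := by omega
          _ = ((p.1 : ℕ) - 1 + 1) * Fintype.card W := (Nat.succ_mul _ _).symm
          _ ≤ (n - 1) * Fintype.card W := Nat.mul_le_mul_right _ (by omega)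
      omega⟩

lemma prodColor_eq_zero {φ₀ : W → Fin m} {hn : 1 ≤ n} {v : Fin n × W}
    (h : (v.1 : ℕ) = 0) : (prodColor φ₀ hn v : ℕ) = φ₀ v.2 := by
  simp [prodColor, h]

lemma prodColor_key {φ₀ : W → Fin m} {hn : 1 ≤ n} {u v : Fin n × W}
    (hne : u ≠ v) (h : prodColor φ₀ hn u = prodColor φ₀ hn v) :
    (u.1 : ℕ) = 0 ∧ (v.1 : ℕ) = 0 := by
  have hval : (prodColor φ₀ hn u : ℕ) = (prodColor φ₀ hn v : ℕ) :=
    congrArg Fin.val h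
  by_cases hu : (u.1 : ℕ) = 0 <;> by_cases hv : (v.1 : ℕ) = 0
  · exact ⟨hu, hv⟩
  · exfalso
    rw [prodColor_eq_zero hu] at hval
    have : (prodColor φ₀ hn v : ℕ) = m + ((v.1 : ℕ) - 1) * Fintype.card W +
        (Fintype.equivFin W v.2 : ℕ) := by simp [prodColor, hv]
    have hm := (φ₀ u.2).isLt
    omega
  · exfalso
    rw [prodColor_eq_zero hv] at hval
    have : (prodColor φ₀ hn u : ℕ) = m + ((u.1 : ℕ) - 1) * Fintype.card W +
        (Fintype.equivFin W u.2 : ℕ) := by simp [prodColor, hu]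
    have hm := (φ₀ v.2).isLt
    omega
  · exfalso
    have e1 : (prodColor φ₀ hn u : ℕ) = m + ((u.1 : ℕ) - 1) * Fintype.card W +
        (Fintype.equivFin W u.2 : ℕ) := by simp [prodColor, hu]
    have e2 : (prodColor φ₀ hn v : ℕ) = m + ((v.1 : ℕ) - 1) * Fintype.card W +
        (Fintype.equivFin W v.2 : ℕ) := by simp [prodColor, hv]
    rw [e1, e2] at hval
    have hd := nat_decomp (Fintype.equivFin W u.2).isLt (Fintype.equivFin W v.2).isLt
      (by omega : ((u.1 : ℕ) - 1) * Fintype.card W + (Fintype.equivFin W u.2 : ℕ) =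
        ((v.1 : ℕ) - 1) * Fintype.card W + (Fintype.equivFin W v.2 : ℕ))
    apply hne
    have h1 : u.1 = v.1 := Fin.ext (by omega)
    have h2 : u.2 = v.2 := (Fintype.equivFin W).injective (Fin.ext hd.2)
    exact Prod.ext h1 h2

lemma prodColor_nonRep {φ₀ : W → Fin m} (hφ₀ : NonRepColoring H φ₀) (hn : 1 ≤ n) :
    NonRepColoring (lexProd (completeGraph (Fin n)) H) (prodColor φ₀ hn) := by
  intro a b p hp hrep
  obtain ⟨s₁, s₂, hsplit, hlen, hmap, hne⟩ := hrep.exists_split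
  have hnodup : (s₁ ++ s₂).Nodup := by
    rw [← hsplit]; exact p.isPath_def.mp hp
  rw [List.nodup_append] at hnodup
  -- every vertex of the support lies in fibre 0
  have hfib : ∀ v ∈ p.support, v.1 = (⟨0, hn⟩ : Fin n) := by
    have hpair : ∀ t (ht : t < s₁.length),
        ((s₁[t]'ht).1 : ℕ) = 0 ∧ ((s₂[t]'(hlen ▸ ht)).1 : ℕ) = 0 := by
      intro t ht
      have hget : prodColor φ₀ hn (s₁[t]'ht) =
          prodColor φ₀ hn (s₂[t]'(hlen ▸ ht)) := by
        have h1 := List.getElem_of_eq hmap (i := t) (by simpa using ht)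
        simpa using h1
      have hvne : s₁[t]'ht ≠ s₂[t]'(hlen ▸ ht) := by
        intro hcon
        exact hnodup.2.2 _ (List.getElem_mem ht) _ (List.getElem_mem (hlen ▸ ht)) hcon
      exact prodColor_key hvne hget
    intro v hv
    rw [hsplit, List.mem_append] at hv
    rcases hv with hv | hv
    · obtain ⟨t, ht, rfl⟩ := List.getElem_of_mem hv
      exact Fin.ext (hpair t ht).1
    · obtain ⟨t, ht, rfl⟩ := List.getElem_of_mem hv
      exact Fin.ext (hpair t (hlen ▸ ht)).2
  obtain ⟨q, hq⟩ := fibreWalk (⟨0, hn⟩ : Fin n) p hfib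
  have hqpath : q.IsPath := by
    rw [Walk.isPath_def, hq]
    refine (p.isPath_def.mp hp).map_on ?_
    intro x hx y hy hxy
    exact Prod.ext ((hfib x hx).trans (hfib y hy).symm) hxy
  apply hφ₀ q hqpath
  have hle : m ≤ m + (n - 1) * Fintype.card W := Nat.le_add_right _ _
  have hcast : p.support.map (prodColor φ₀ hn) =
      (q.support.map φ₀).map (Fin.castLE hle) := by
    rw [hq, List.map_map, List.map_map]
    refine List.map_congr_left (fun v hv => ?_)
    have h0 : (v.1 : ℕ) = 0 := congrArg Fin.val (hfib v hv)
    exact Fin.ext (by simp [prodColor, h0, Fin.castLE])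
  rw [hcast] at hrep
  exact hrep.of_map (Fin.castLE_injective hle)
end upper

/-- `π(K_n ∘ H) = π(H) + (n-1)·|V(H)|`. -/
theorem thueNumber_lexProd_complete {W : Type*} [Fintype W] (H : SimpleGraph W)
    (n : ℕ) (hn : 1 ≤ n) :
    thueNumber (lexProd (completeGraph (Fin n)) H) =
      thueNumber H + (n - 1) * Fintype.card W := by
  classical
  obtain ⟨φ₀, hφ₀⟩ := thueNumber_spec H
  refine le_antisymm (thueNumber_le _ (prodColor_nonRep hφ₀ hn)) ?_
  obtain ⟨ψ, hψ⟩ := thueNumber_spec (lexProd (completeGraph (Fin n)) H)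
  exact lowerBound hψ hn
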